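/- Let A and B be invertible formal power series over a commutative ring with constant term 1, and let ξ be a ring element. Define the 'twist' of a power series P(t) with constant term 1 by rank r and ξ as P^{ξ}(t) := (1+ξ t)^r · P(t/(1+ξ t)) (expanded formally). Then for the quotient series Q(t) = A(t)/B(t) with coefficients c_k, the coefficients of the twisted quotient A^{ξ}(t)/B^{ξ}(t) are given by: the k-th coefficient equals Σ_{i=1}^{k} (−1)^{k−i} C(k−1, i−1) c_i ξ^{k−i} for every k ≥ 1, where both A and B are twisted with the same rank r. -/

import Mathlib

open PowerSeries

/-- Formal composition `P(τ(t))` of a power series `P` with a power series `τ` of zero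
constant term: the `k`-th coefficient is `Σ_{i ≤ k} pᵢ · (coefficient of t^k in τ^i)`. -/
noncomputable def psComp {R : Type*} [CommRing R] (P τ : PowerSeries R) : PowerSeries R :=
  PowerSeries.mk fun k => ∑ i ∈ Finset.range (k + 1), (coeff i P) * coeff k (τ ^ i)

/-- The twist of a power series `P(t)` by rank `r` and `ξ`:
`P^ξ(t) = (1 + ξt)^r · P(t / (1 + ξt))`, expanded formally. -/
noncomputable def twist {R : Type*} [CommRing R] (r : ℕ) (ξ : R) (P : PowerSeries R) :
    PowerSeries R :=
  (1 + C ξ * X) ^ r * psComp P (X * Ring.inverse (1 + C ξ * X))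

section aux
variable {R : Type*} [CommRing R]

lemma ringInv_eq {a x : PowerSeries R} (h : a * x = 1) : Ring.inverse a = x := by
  have hu : IsUnit a := IsUnit.of_mul_eq_one _ h
  calc Ring.inverse a = Ring.inverse a * (a * x) := by rw [h, mul_one]
    _ = (Ring.inverse a * a) * x := by ring
    _ = x := by rw [Ring.inverse_mul_cancel _ hu, one_mul]

lemma coeff_pow_eq_zero {τ : PowerSeries R} (hτ : constantCoeff τ = 0)
    {a i : ℕ} (h : a < i) : coeff a (τ ^ i) = 0 := by
  have hX : (X : PowerSeries R) ∣ τ := X_dvd_iff.mpr hτ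
  have h2 : (X : PowerSeries R) ^ i ∣ τ ^ i := pow_dvd_pow_of_dvd hX i
  exact X_pow_dvd_iff.mp h2 a h

lemma coeff_psComp {P τ : PowerSeries R} (k : ℕ) :
    coeff k (psComp P τ) =
      ∑ i ∈ Finset.range (k + 1), (coeff i P) * coeff k (τ ^ i) := by
  simp [psComp]

lemma psComp_mul {τ : PowerSeries R} (hτ : constantCoeff τ = 0) (P Q : PowerSeries R) :
    psComp (P * Q) τ = psComp P τ * psComp Q τ := by
  ext k
  set F : ℕ × ℕ → R := fun p => coeff p.1 P * coeff p.2 Q * coeff k (τ ^ (p.1 + p.2)) with hF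
  have key : ∀ p : ℕ × ℕ, p ∈ Finset.range (k+1) ×ˢ Finset.range (k+1) → k < p.1 + p.2 → F p = 0 := by
    intro p _ hp
    simp [hF, coeff_pow_eq_zero hτ hp]
  have hL : coeff k (psComp (P * Q) τ) = ∑ p ∈ Finset.range (k+1) ×ˢ Finset.range (k+1), F p := by
    rw [coeff_psComp]
    have : ∀ n ∈ Finset.range (k+1), coeff n (P * Q) * coeff k (τ ^ n)
        = ∑ p ∈ Finset.HasAntidiagonal.antidiagonal n, F p := by
      intro n _
      rw [coeff_mul, Finset.sum_mul]
      refine Finset.sum_congr rfl fun p hp => ?_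
      rw [Finset.HasAntidiagonal.mem_antidiagonal] at hp
      simp [hF, hp]
    rw [Finset.sum_congr rfl this, ← Finset.sum_biUnion]
    · refine Finset.sum_subset ?_ ?_
      · intro p hp
        simp only [Finset.mem_biUnion, Finset.mem_range, Finset.HasAntidiagonal.mem_antidiagonal] at hp
        obtain ⟨n, hn, rfl⟩ := hp
        simp only [Finset.mem_product, Finset.mem_range]
        omega
      · intro p hp hp'
        refine key p hp ?_
        by_contra hc
        exact hp' (Finset.mem_biUnion.mpr ⟨p.1+p.2, by simp; omega, Finset.HasAntidiagonal.mem_antidiagonal.mpr rfl⟩)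
    · intro m _ n _ hmn
      simp only [Finset.disjoint_left, Finset.HasAntidiagonal.mem_antidiagonal]
      rintro p rfl h
      exact hmn h
  have hR : coeff k (psComp P τ * psComp Q τ)
      = ∑ p ∈ Finset.range (k+1) ×ˢ Finset.range (k+1), F p := by
    rw [coeff_mul]
    have step : ∀ q ∈ Finset.HasAntidiagonal.antidiagonal k,
        coeff q.1 (psComp P τ) * coeff q.2 (psComp Q τ)
        = ∑ p ∈ Finset.range (k+1) ×ˢ Finset.range (k+1),
            coeff p.1 P * coeff p.2 Q * (coeff q.1 (τ ^ p.1) * coeff q.2 (τ ^ p.2)) := by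
      intro q hq
      rw [Finset.HasAntidiagonal.mem_antidiagonal] at hq
      have h1 : coeff q.1 (psComp P τ)
          = ∑ i ∈ Finset.range (k+1), coeff i P * coeff q.1 (τ ^ i) := by
        rw [coeff_psComp]
        refine Finset.sum_subset ?_ ?_
        · intro i hi; simp only [Finset.mem_range] at *; omega
        · intro i _ hi
          simp only [Finset.mem_range] at hi
          rw [coeff_pow_eq_zero hτ (by omega), mul_zero]
      have h2 : coeff q.2 (psComp Q τ)
          = ∑ j ∈ Finset.range (k+1), coeff j Q * coeff q.2 (τ ^ j) := by
        rw [coeff_psComp]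
        refine Finset.sum_subset ?_ ?_
        · intro i hi; simp only [Finset.mem_range] at *; omega
        · intro j _ hj
          simp only [Finset.mem_range] at hj
          rw [coeff_pow_eq_zero hτ (by omega), mul_zero]
      rw [h1, h2, Finset.sum_mul_sum, Finset.sum_product]
      refine Finset.sum_congr rfl fun i _ => Finset.sum_congr rfl fun j _ => by ring
    rw [Finset.sum_congr rfl step, Finset.sum_comm]
    refine Finset.sum_congr rfl fun p _ => ?_
    rw [← Finset.mul_sum, hF]
    have : ∑ q ∈ Finset.HasAntidiagonal.antidiagonal k, coeff q.1 (τ ^ p.1) * coeff q.2 (τ ^ p.2)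
        = coeff k (τ ^ (p.1 + p.2)) := by
      rw [pow_add, coeff_mul]
    rw [this]
  rw [hL, hR]

lemma coeff_tau_pow (ξ : R) {i k : ℕ} (h1 : 1 ≤ i) (h2 : i ≤ k) :
    coeff k ((X * Ring.inverse (1 + C ξ * X)) ^ i)
      = (-1 : R) ^ (k - i) * ((k - 1).choose (i - 1) : R) * ξ ^ (k - i) := by
  set u : PowerSeries R := 1 + C ξ * X with hu_def
  have hu_eq : u = rescale (-ξ) (1 - X) := by
    ext n
    rcases n with _ | _ | n <;>
      simp [hu_def, coeff_rescale, map_sub, coeff_one, coeff_X, coeff_C_mul]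
  have hpow : u ^ i * rescale (-ξ) ((invOneSubPow R i).val) = 1 := by
    rw [hu_eq, ← map_pow, ← map_mul, ← invOneSubPow_inv_eq_one_sub_pow,
      (invOneSubPow R i).inv_val, map_one]
  have hinv : Ring.inverse u ^ i = rescale (-ξ) ((invOneSubPow R i).val) := by
    rw [Ring.inverse_pow, ringInv_eq hpow]
  rw [mul_pow, hinv, coeff_X_pow_mul', if_pos h2, coeff_rescale,
    invOneSubPow_val_eq_mk_sub_one_add_choose_of_pos R i (by omega), coeff_mk]
  have : i - 1 + (k - i) = k - 1 := by omega
  rw [this, neg_pow]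
  ring

end aux

/-- Let `A`, `B` be formal power series with constant term `1` over a commutative ring,
`ξ` a ring element, and `c_k` the coefficients of the quotient `Q = A/B`. Then the `k`-th
coefficient of the twisted quotient `A^ξ / B^ξ` (both twisted with the same rank `r`) is
`Σ_{i=1}^{k} (-1)^{k-i} C(k-1, i-1) cᵢ ξ^{k-i}` for every `k ≥ 1`. -/
theorem coeff_twist_quotient {R : Type*} [CommRing R] (A B : PowerSeries R)
    (hA : constantCoeff A = 1) (hB : constantCoeff B = 1) (ξ : R) (r : ℕ)
    (c : ℕ → R) (hc : ∀ k, c k = coeff k (A * Ring.inverse B))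
    (k : ℕ) (hk : 1 ≤ k) :
    coeff k (twist r ξ A * Ring.inverse (twist r ξ B)) =
      ∑ i ∈ Finset.Icc 1 k,
        (-1 : R) ^ (k - i) * ((k - 1).choose (i - 1) : R) * c i * ξ ^ (k - i) := by
  set u : PowerSeries R := 1 + C ξ * X with hu_def
  set τ : PowerSeries R := X * Ring.inverse u with hτ_def
  have hτ0 : constantCoeff τ = 0 := by simp [hτ_def]
  have hBu : IsUnit B := isUnit_iff_constantCoeff.mpr (hB ▸ isUnit_one)
  set Q : PowerSeries R := A * Ring.inverse B with hQ_def
  have hQB : Q * B = A := by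
    rw [hQ_def, mul_assoc, Ring.inverse_mul_cancel _ hBu, mul_one]
  have hcomp : psComp A τ = psComp Q τ * psComp B τ := by
    rw [← psComp_mul hτ0, hQB]
  have h1 : twist r ξ A = psComp Q τ * twist r ξ B := by
    unfold twist
    rw [← hu_def, ← hτ_def, hcomp]; ring
  have hu : IsUnit u := by
    refine isUnit_iff_constantCoeff.mpr ?_
    simp [hu_def]
  have hBτ : IsUnit (psComp B τ) := by
    refine isUnit_iff_constantCoeff.mpr ?_
    have : constantCoeff (psComp B τ) = 1 := by
      rw [← coeff_zero_eq_constantCoeff_apply, coeff_psComp]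
      simp [hB]
    rw [this]; exact isUnit_one
  have htw : IsUnit (twist r ξ B) := by
    unfold twist
    rw [← hu_def, ← hτ_def]
    exact (hu.pow r).mul hBτ
  have h2 : twist r ξ A * Ring.inverse (twist r ξ B) = psComp Q τ := by
    rw [h1, mul_assoc, Ring.mul_inverse_cancel _ htw, mul_one]
  rw [h2, coeff_psComp, Finset.sum_range_succ']
  have hzero : coeff 0 Q * coeff k (τ ^ 0) = 0 := by
    rw [pow_zero, coeff_one, if_neg (by omega), mul_zero]
  rw [hzero, add_zero]
  have hIcc : Finset.Icc 1 k = Finset.Ico 1 (k + 1) := by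
    rw [Finset.Ico_add_one_right_eq_Icc]
  rw [hIcc, Finset.sum_Ico_eq_sum_range]
  simp only [add_tsub_cancel_right]
  refine Finset.sum_congr rfl fun i hi => ?_
  rw [Finset.mem_range] at hi
  rw [coeff_tau_pow ξ (by omega) (by omega), hc (1 + i)]
  have e1 : 1 + i = i + 1 := by omega
  rw [e1, hQ_def]
  ring
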